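/- For subspaces U, V ⊆ E one has δ(U,V) < 1 if and only if dim U ≤ dim V and U ∩ V⊥ = 0. -/

import Mathlib

open Module Submodule
open scoped RealInnerProductSpace

noncomputable section

variable {E : Type*} [NormedAddCommGroup E] [InnerProductSpace ℝ E] [FiniteDimensional ℝ E]

/-- The orthogonal projection onto a subspace `U`, viewed as a continuous linear
endomorphism of `E`. -/
noncomputable def projCLM (U : Submodule ℝ E) : E →L[ℝ] E :=
  U.subtypeL.comp (orthogonalProjection U)

/-- The gap `δ(U,V) := ‖P_U - P_V ∘ P_U‖` between two subspaces. -/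
noncomputable def gap (U V : Submodule ℝ E) : ℝ :=
  ‖projCLM U - (projCLM V).comp (projCLM U)‖

lemma projCLM_apply (U : Submodule ℝ E) (x : E) :
    projCLM U x = (orthogonalProjection U x : E) := rfl

lemma norm_proj_le (U : Submodule ℝ E) (x : E) :
    ‖(orthogonalProjection U x : E)‖ ≤ ‖x‖ := by
  calc ‖(orthogonalProjection U x : E)‖ = ‖orthogonalProjection U x‖ := rfl
    _ ≤ ‖orthogonalProjection U‖ * ‖x‖ := (orthogonalProjection U).le_opNorm x
    _ ≤ 1 * ‖x‖ :=
        mul_le_mul_of_nonneg_right (orthogonalProjection_norm_le U) (norm_nonneg x)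
    _ = ‖x‖ := one_mul _

/-- Pythagoras for the orthogonal projection. -/
lemma pythag (V : Submodule ℝ E) (x : E) :
    ‖x‖ ^ 2 = ‖(orthogonalProjection V x : E)‖ ^ 2 + ‖x - orthogonalProjection V x‖ ^ 2 := by
  have h : ⟪(orthogonalProjection V x : E), x - (orthogonalProjection V x : E)⟫ = 0 := by
    rw [real_inner_comm]
    exact Submodule.starProjection_inner_eq_zero (K := V) x _ (orthogonalProjection V x).2
  have h2 := norm_add_sq_real ((orthogonalProjection V x : E)) (x - orthogonalProjection V x)
  rw [add_sub_cancel] at h2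
  rw [h2, h]; ring

/-- `δ(U,V) < 1` if and only if `dim U ≤ dim V` and `U ∩ V⊥ = 0`. -/
theorem gap_lt_one_iff (U V : Submodule ℝ E) :
    gap U V < 1 ↔ finrank ℝ U ≤ finrank ℝ V ∧ U ⊓ Vᗮ = ⊥ := by
  have hdim : U ⊓ Vᗮ = ⊥ → finrank ℝ U ≤ finrank ℝ V := by
    intro h
    have hinj : Function.Injective
        ((orthogonalProjection V).toLinearMap.comp U.subtype) := by
      rw [← LinearMap.ker_eq_bot, LinearMap.ker_eq_bot']
      intro u hu
      have h1 : (u : E) ∈ Vᗮ := orthogonalProjection_eq_zero_iff.mp hu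
      have h2 : (u : E) ∈ U ⊓ Vᗮ := ⟨u.2, h1⟩
      rw [h] at h2
      exact Subtype.ext h2
    exact LinearMap.finrank_le_finrank_of_injective hinj
  constructor
  · intro hg
    have hbot : U ⊓ Vᗮ = ⊥ := by
      rw [Submodule.eq_bot_iff]
      intro x hx
      by_contra hx0
      have hxU : x ∈ U := hx.1
      have hxV : x ∈ Vᗮ := hx.2
      have hT : (projCLM U - (projCLM V).comp (projCLM U)) x = x := by
        simp [projCLM_apply, ContinuousLinearMap.comp_apply,
          Submodule.starProjection_eq_self_iff.mpr hxU,
          Submodule.starProjection_apply, Submodule.orthogonalProjectionOnto_apply_of_mem_orthogonal hxV]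
      have hle := (projCLM U - (projCLM V).comp (projCLM U)).le_opNorm x
      rw [hT] at hle
      have hxpos : 0 < ‖x‖ := norm_pos_iff.mpr hx0
      have : gap U V * ‖x‖ < 1 * ‖x‖ := by
        apply mul_lt_mul_of_pos_right hg hxpos
      rw [one_mul] at this
      exact absurd (lt_of_le_of_lt hle this) (lt_irrefl _)
    exact ⟨hdim hbot, hbot⟩
  · rintro ⟨-, hbot⟩
    rcases eq_or_ne U ⊥ with rfl | hU
    · have : gap (⊥ : Submodule ℝ E) V = 0 := by
        simp [gap, projCLM, orthogonalProjection_bot]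
      rw [this]; norm_num
    · -- nonzero element of U, normalize to the unit sphere of U
      obtain ⟨u₀, hu₀⟩ := Submodule.exists_mem_ne_zero_of_ne_bot hU
      set f : U → ℝ := fun u => ‖(u : E) - orthogonalProjection V (u : E)‖ with hf
      have hcont : Continuous f := by
        apply Continuous.norm
        exact continuous_subtype_val.sub
          (((orthogonalProjection V).continuous.comp continuous_subtype_val).subtype_val)
      have hSne : (Metric.sphere (0 : U) 1).Nonempty := by
        refine ⟨(‖(⟨u₀, hu₀.1⟩ : U)‖⁻¹) • ⟨u₀, hu₀.1⟩, ?_⟩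
        have hn : (⟨u₀, hu₀.1⟩ : U) ≠ 0 := fun h => hu₀.2 (congrArg Subtype.val h)
        rw [mem_sphere_zero_iff_norm, norm_smul, norm_inv, norm_norm]
        exact inv_mul_cancel₀ (norm_ne_zero_iff.mpr hn)
      obtain ⟨w, hwS, hwmax⟩ :=
        (isCompact_sphere (0 : U) 1).exists_isMaxOn hSne hcont.continuousOn
      set c := f w with hc
      have hwnorm : ‖(w : E)‖ = 1 := by
        simpa using mem_sphere_zero_iff_norm.mp hwS
      have hc0 : 0 ≤ c := norm_nonneg _
      have hclt : c < 1 := by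
        have hP : (orthogonalProjection V (w : E) : E) ≠ 0 := by
          intro h0
          have h1 : (w : E) ∈ Vᗮ := orthogonalProjection_eq_zero_iff.mp (by
            exact_mod_cast Subtype.ext h0)
          have h2 : (w : E) ∈ U ⊓ Vᗮ := ⟨w.2, h1⟩
          rw [hbot] at h2
          rw [h2] at hwnorm; simp at hwnorm
        have hp := pythag V (w : E)
        rw [hwnorm] at hp
        have hPpos : 0 < ‖(orthogonalProjection V (w : E) : E)‖ ^ 2 :=
          pow_pos (norm_pos_iff.mpr hP) 2
        have hcsq : c ^ 2 < 1 := by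
          have : c ^ 2 = ‖(w : E) - orthogonalProjection V (w : E)‖ ^ 2 := rfl
          nlinarith
        nlinarith
      have hgap : gap U V ≤ c := by
        apply ContinuousLinearMap.opNorm_le_bound _ hc0
        intro x
        have hTx : (projCLM U - (projCLM V).comp (projCLM U)) x
            = (orthogonalProjection U x : E)
              - orthogonalProjection V ((orthogonalProjection U x : E)) := by
          simp [projCLM_apply, ContinuousLinearMap.comp_apply]
        set y : U := orthogonalProjection U x with hy
        rcases eq_or_ne y 0 with hy0 | hy0
        · rw [hTx, hy0]
          simp
          positivity
        · have hypos : 0 < ‖(y : E)‖ := by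
            rw [norm_pos_iff]
            exact fun h => hy0 (Subtype.ext h)
          set u : U := (‖(y : E)‖⁻¹) • y with hu
          have huS : u ∈ Metric.sphere (0 : U) 1 := by
            rw [mem_sphere_zero_iff_norm]
            have : ‖u‖ = ‖(y : E)‖⁻¹ * ‖y‖ := by
              rw [hu, norm_smul]; simp
            rw [this]
            exact inv_mul_cancel₀ (ne_of_gt hypos)
          have hfu : f u = ‖(y : E)‖⁻¹ * ‖(y : E) - orthogonalProjection V (y : E)‖ := by
            have hcoe : ((u : U) : E) = ‖(y : E)‖⁻¹ • (y : E) := rfl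
            rw [hf]
            simp only [hcoe, map_smul, Submodule.coe_smul]
            rw [← smul_sub, norm_smul]
            simp
          have hle1 : ‖(y : E) - orthogonalProjection V (y : E)‖ ≤ c * ‖(y : E)‖ := by
            have := hwmax huS
            simp only [Set.mem_setOf_eq] at this
            rw [hfu] at this
            have h2 : ‖(y : E)‖⁻¹ * ‖(y : E) - orthogonalProjection V (y : E)‖ ≤ c := this
            calc ‖(y : E) - orthogonalProjection V (y : E)‖
                = ‖(y : E)‖ * (‖(y : E)‖⁻¹ * ‖(y : E) - orthogonalProjection V (y : E)‖) := by
                  field_simp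
              _ ≤ ‖(y : E)‖ * c := by
                  exact mul_le_mul_of_nonneg_left h2 (le_of_lt hypos)
              _ = c * ‖(y : E)‖ := mul_comm _ _
          have hyx : ‖(y : E)‖ ≤ ‖x‖ := norm_proj_le U x
          rw [hTx]
          calc ‖(y : E) - orthogonalProjection V ((y : E))‖ ≤ c * ‖(y : E)‖ := hle1
            _ ≤ c * ‖x‖ := mul_le_mul_of_nonneg_left hyx hc0
      exact lt_of_le_of_lt hgap hclt
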